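/- Let k ≥ 2 and let b = (b₁, …, b_k) ∈ ℤ^k be nonzero, and let φ_b : ℤ^k → ℤ be the homomorphism φ_b(u) = u · b = Σᵢ uᵢbᵢ. Then there exist vectors λ⁽¹⁾, …, λ⁽ᵏ⁻¹⁾ ∈ ℤ^k generating the kernel of φ_b such that ‖λ⁽ⁱ⁾‖₁ ≤ 2^{k−1}‖b‖₁ for all i, where ‖v‖₁ = Σᵢ |vᵢ| denotes the ℓ¹-norm on ℤ^k. -/

import Mathlib

open Finset

lemma gcd_univ_succ {n : ℕ} (a : Fin (n + 1) → ℤ) :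
    Finset.gcd Finset.univ a = GCDMonoid.gcd (a 0) (Finset.gcd Finset.univ (Fin.tail a)) := by
  rw [Fin.univ_succ, Finset.cons_eq_insert, Finset.gcd_insert, Finset.map_eq_image,
    Finset.gcd_image]
  rfl

lemma gcd_nonneg' {n : ℕ} (a : Fin n → ℤ) : 0 ≤ Finset.gcd Finset.univ a := by
  have h := Finset.normalize_gcd (s := (Finset.univ : Finset (Fin n))) (f := a)
  rw [← Int.abs_eq_normalize] at h
  rw [← h]; exact abs_nonneg _

lemma gcd_pos' {n : ℕ} (a : Fin (n + 1) → ℤ) (h : a (Fin.last n) ≠ 0) :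
    0 < Finset.gcd Finset.univ a := by
  rcases (gcd_nonneg' a).lt_or_eq with h' | h'
  · exact h'
  · exact absurd (Finset.gcd_eq_zero_iff.1 h'.symm _ (mem_univ _)) h


lemma arith_key (g g' L S T c a : ℤ) (hg : 0 < g) (hgle : g ≤ g') (hg' : 0 < g')
    (hL2 : 2 * (g * L) ≤ g') (hga : g' ≤ a) (hL : 0 ≤ L) (hS : 0 ≤ S) (hT : 0 ≤ T)
    (hc : 0 ≤ c) (hmain : g' * S ≤ c + L * a + T) : g * (L + S) ≤ c + (a + T) := by
  have h1 : g' * (g * (L + S)) ≤ g' * (c + (a + T)) := by nlinarith [mul_le_mul_of_nonneg_left hmain hg.le]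
  exact le_of_mul_le_mul_left h1 hg'

lemma BL : ∀ (n : ℕ) (a : Fin (n + 1) → ℤ), a (Fin.last n) ≠ 0 →
    (∀ j, a j = 0 ∨ |a (Fin.last n)| ≤ |a j|) → ∀ c : ℤ, Finset.gcd Finset.univ a ∣ c →
    ∃ μ : Fin (n + 1) → ℤ, (∑ j, μ j * a j = c) ∧
      Finset.gcd Finset.univ a * ∑ j, |μ j| ≤ |c| + ∑ j, |a j| := by
  intro n
  induction n with
  | zero =>
    intro a hlast _ c hc
    have hg : Finset.gcd Finset.univ a = |a 0| := by
      rw [show (Finset.univ : Finset (Fin 1)) = {0} from rfl, Finset.gcd_singleton,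
        ← Int.abs_eq_normalize]
    rw [hg] at hc
    have ha0 : a 0 ∣ c := (abs_dvd _ _).1 hc
    refine ⟨fun _ => c / a 0, ?_, ?_⟩
    · simp [Int.ediv_mul_cancel ha0]
    · rw [hg, Fin.sum_univ_one, Fin.sum_univ_one, ← abs_mul, mul_comm,
        Int.ediv_mul_cancel ha0]
      have : (0:ℤ) ≤ |a 0| := abs_nonneg _
      omega
  | succ n ih =>
    intro a hlast hmin c hc
    set t : Fin (n + 1) → ℤ := Fin.tail a with ht
    have htlast : t (Fin.last n) = a (Fin.last (n + 1)) := by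
      show a (Fin.last n).succ = _
      rw [Fin.succ_last]
    have hlast' : t (Fin.last n) ≠ 0 := by rw [htlast]; exact hlast
    have hmin' : ∀ j, t j = 0 ∨ |t (Fin.last n)| ≤ |t j| := by
      intro j; rw [htlast]; exact hmin (Fin.succ j)
    set g' : ℤ := Finset.gcd Finset.univ t with hg'
    set g : ℤ := Finset.gcd Finset.univ a with hgdef
    have hsplit : g = GCDMonoid.gcd (a 0) g' := gcd_univ_succ a
    have hg'pos : 0 < g' := gcd_pos' t hlast'
    have hgpos : 0 < g := gcd_pos' a hlast
    have hgg' : g ∣ g' := hsplit ▸ gcd_dvd_right _ _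
    have hga0 : g ∣ a 0 := hsplit ▸ gcd_dvd_left _ _
    have hgle : g ≤ g' := Int.le_of_dvd hg'pos hgg'
    by_cases ha0 : a 0 = 0
    · -- head is zero
      have hgeq : g = g' := by
        rw [hsplit, ha0, gcd_zero_left, ← Int.abs_eq_normalize, abs_of_nonneg hg'pos.le]
      obtain ⟨μ', hsum, hbound⟩ := ih t hlast' hmin' c (show g' ∣ c from hgeq ▸ hc)
      refine ⟨Fin.cons 0 μ', ?_, ?_⟩
      · rw [Fin.sum_univ_succ, Fin.cons_zero, zero_mul, zero_add]
        simp only [Fin.cons_succ]; exact hsum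
      · rw [Fin.sum_univ_succ, Fin.sum_univ_succ (f := fun j : Fin (n+2) => |a j|), Fin.cons_zero, ha0]
        simp only [abs_zero, zero_add]
        have : ∑ j : Fin (n+1), |(Fin.cons (0:ℤ) μ' : Fin (n+2) → ℤ) j.succ| = ∑ j : Fin (n+1), |μ' j| := by
          simp [Fin.cons_succ]
        rw [this, hgeq]
        exact hbound
    · -- head nonzero
      have hg'a0 : g' ≤ |a 0| := by
        have h1 : g' ∣ |a (Fin.last (n+1))| := (dvd_abs _ _).2 (htlast ▸ Finset.gcd_dvd (mem_univ (Fin.last n)))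
        have h2 : g' ≤ |a (Fin.last (n+1))| := Int.le_of_dvd (abs_pos.2 hlast) h1
        rcases hmin 0 with h | h
        · exact absurd h ha0
        · exact h2.trans h
      set M : ℤ := g' / g with hM
      have hgM : g * M = g' := Int.mul_ediv_cancel' hgg'
      have hMpos : 0 < M := by nlinarith
      set A : ℤ := Int.gcdA (a 0) g' with hA
      set B : ℤ := Int.gcdB (a 0) g' with hB
      have hbez : g = a 0 * A + g' * B := by
        rw [hsplit, ← Int.coe_gcd]; exact Int.gcd_eq_gcd_ab (a 0) g'
      have hcg : g * (c / g) = c := Int.mul_ediv_cancel' hc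
      set lamhat : ℤ := A * (c / g) with hlamhat
      have hkey : c - lamhat * a 0 = g' * (B * (c / g)) := by
        rw [hlamhat]; linear_combination (c / g) * hbez - hcg
      set lam1 : ℤ := (lamhat + M / 2) % M - M / 2 with hlam1
      have hemod := Int.emod_def (lamhat + M / 2) M
      have hemod0 := Int.emod_nonneg (lamhat + M / 2) hMpos.ne'
      have hemod1 := Int.emod_lt_of_pos (lamhat + M / 2) hMpos
      have h2M := Int.emod_def M 2
      have h2M0 := Int.emod_nonneg M (two_ne_zero)
      have h2M1 := Int.emod_lt_of_pos M (b := 2) (by norm_num)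
      have habs : 2 * |lam1| ≤ M := by
        rcases abs_cases lam1 with ⟨h, _⟩ | ⟨h, _⟩ <;> omega
      have hdvdlam : M ∣ (lamhat - lam1) := ⟨(lamhat + M / 2) / M, by omega⟩
      set c1 : ℤ := c - lam1 * a 0 with hc1
      have hg'Ma0 : g' ∣ M * a 0 := by
        refine ⟨a 0 / g, ?_⟩
        apply mul_left_cancel₀ hgpos.ne'
        rw [← mul_assoc, hgM]
        rw [← mul_assoc, mul_comm g g', mul_assoc, Int.mul_ediv_cancel' hga0]
      have hg'c1 : g' ∣ c1 := by
        obtain ⟨k, hk⟩ := hdvdlam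
        have : c1 = (c - lamhat * a 0) + (lamhat - lam1) * a 0 := by ring
        rw [this, hkey, hk]
        exact dvd_add (Dvd.intro _ rfl) (by rw [mul_assoc, mul_comm k (a 0), ← mul_assoc]; exact hg'Ma0.mul_right k)
      obtain ⟨μ', hsum, hbound⟩ := ih t hlast' hmin' c1 hg'c1
      refine ⟨Fin.cons lam1 μ', ?_, ?_⟩
      · rw [Fin.sum_univ_succ, Fin.cons_zero]
        have : ∑ j : Fin (n+1), (Fin.cons lam1 μ' : Fin (n+2) → ℤ) j.succ * a j.succ = c1 := by
          simp only [Fin.cons_succ]; exact hsum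
        rw [this, hc1]; ring
      · rw [Fin.sum_univ_succ, Fin.sum_univ_succ (f := fun j : Fin (n+2) => |a j|), Fin.cons_zero]
        have hrw : ∑ j : Fin (n+1), |(Fin.cons lam1 μ' : Fin (n+2) → ℤ) j.succ| = ∑ j : Fin (n+1), |μ' j| := by simp [Fin.cons_succ]
        rw [hrw]
        have hTeq : ∑ j : Fin (n+1), |t j| = ∑ j : Fin (n+1), |a j.succ| := rfl
        rw [← hTeq]
        set S : ℤ := ∑ j, |μ' j|
        set T : ℤ := ∑ j, |t j|
        have hSnn : 0 ≤ S := Finset.sum_nonneg fun _ _ => abs_nonneg _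
        have hTnn : 0 ≤ T := Finset.sum_nonneg fun _ _ => abs_nonneg _
        have hc1abs : |c1| ≤ |c| + |lam1| * |a 0| := by
          calc |c1| ≤ |c| + |lam1 * a 0| := abs_sub _ _
          _ = |c| + |lam1| * |a 0| := by rw [abs_mul]
        have hb2 : g' * S ≤ |c| + |lam1| * |a 0| + T := le_trans hbound (by omega)
        exact arith_key g g' |lam1| S T |c| |a 0| hgpos hgle hg'pos
          (by calc 2 * (g * |lam1|) = g * (2 * |lam1|) := by ring
              _ ≤ g * M := mul_le_mul_of_nonneg_left habs hgpos.le
              _ = g' := hgM)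
          hg'a0 (abs_nonneg _) hSnn hTnn (abs_nonneg _) hb2

def consHom (n : ℕ) : (Fin (n + 1) → ℤ) →+ (Fin (n + 2) → ℤ) where
  toFun u := Fin.cons 0 u
  map_zero' := by funext j; refine Fin.cases ?_ ?_ j <;> simp
  map_add' u v := by funext j; refine Fin.cases ?_ ?_ j <;> simp


lemma CORE : ∀ (n : ℕ) (b : Fin (n + 1) → ℤ), b (Fin.last n) ≠ 0 →
    (∀ j, b j = 0 ∨ |b (Fin.last n)| ≤ |b j|) →
    ∃ lam : Fin n → (Fin (n + 1) → ℤ),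
      (∀ i, ∑ j, lam i j * b j = 0) ∧
      (∀ w : Fin (n + 1) → ℤ, (∑ j, w j * b j = 0) →
        w ∈ AddSubgroup.closure (Set.range lam)) ∧
      (∀ i, ∑ j, |lam i j| ≤ 2 * ∑ j, |b j|) := by
  intro n
  induction n with
  | zero =>
    intro b hlast _
    refine ⟨Fin.elim0, fun i => i.elim0, ?_, fun i => i.elim0⟩
    intro w hw
    rw [Fin.sum_univ_one] at hw
    have hw0 : w 0 = 0 := by
      rcases mul_eq_zero.1 hw with h | h
      · exact h
      · exact absurd h hlast
    have : w = 0 := by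
      funext j
      have hj : j = 0 := Fin.fin_one_eq_zero j
      rw [hj, hw0]; rfl
    rw [this]
    exact zero_mem _
  | succ n ih =>
    intro b hlast hmin
    set t : Fin (n + 1) → ℤ := Fin.tail b with ht
    have htlast : t (Fin.last n) = b (Fin.last (n + 1)) := by
      show b (Fin.last n).succ = _
      rw [Fin.succ_last]
    have hlast' : t (Fin.last n) ≠ 0 := by rw [htlast]; exact hlast
    have hmin' : ∀ j, t j = 0 ∨ |t (Fin.last n)| ≤ |t j| := by
      intro j; rw [htlast]; exact hmin (Fin.succ j)
    obtain ⟨lam', h0', hgen', hnorm'⟩ := ih t hlast' hmin'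
    set g' : ℤ := Finset.gcd Finset.univ t with hg'
    set g : ℤ := Finset.gcd Finset.univ b with hgdef
    have hsplit : g = GCDMonoid.gcd (b 0) g' := gcd_univ_succ b
    have hg'pos : 0 < g' := gcd_pos' t hlast'
    have hgpos : 0 < g := gcd_pos' b hlast
    have hgg' : g ∣ g' := hsplit ▸ gcd_dvd_right _ _
    have hgb0 : g ∣ b 0 := hsplit ▸ gcd_dvd_left _ _
    set p : ℤ := g' / g with hp
    have hgp : g * p = g' := Int.mul_ediv_cancel' hgg'
    have hppos : 0 < p := by nlinarith
    set c : ℤ := -((b 0 / g) * g') with hcdef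
    have hcdvd : g' ∣ c := by rw [hcdef]; exact (dvd_mul_left g' (b 0 / g)).neg_right
    obtain ⟨μ, hμsum, hμnorm⟩ := BL n t hlast' hmin' c hcdvd
    set lam0 : Fin (n + 2) → ℤ := Fin.cons p μ with hlam0def
    have hpb0 : p * b 0 = (b 0 / g) * g' := by
      apply mul_left_cancel₀ hgpos.ne'
      rw [← mul_assoc, hgp, ← mul_assoc, mul_comm g (b 0 / g), Int.ediv_mul_cancel hgb0,
        mul_comm g' (b 0), mul_comm (b 0) g']
    have hlam0ker : ∑ j, lam0 j * b j = 0 := by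
      rw [Fin.sum_univ_succ]
      have h1 : (lam0 0) = p := rfl
      have h2 : ∑ j : Fin (n + 1), lam0 j.succ * b j.succ = c := by
        simp only [hlam0def, Fin.cons_succ]; exact hμsum
      rw [h1, h2, hcdef, hpb0]; ring
    set J := consHom n with hJ
    set lam : Fin (n + 1) → (Fin (n + 2) → ℤ) := Fin.cons lam0 (fun i => J (lam' i)) with hlam
    have hJapp : ∀ u j, J u (Fin.succ j) = u j := fun u j => by
      show (Fin.cons 0 u : Fin (n+2) → ℤ) j.succ = u j
      rw [Fin.cons_succ]
    have hJ0 : ∀ u, J u 0 = 0 := fun u => rfl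
    have hlamsucc : ∀ i, lam (Fin.succ i) = J (lam' i) := fun i => by
      rw [hlam, Fin.cons_succ]
    have hlamzero : lam 0 = lam0 := by rw [hlam, Fin.cons_zero]
    refine ⟨lam, ?_, ?_, ?_⟩
    · -- all in kernel
      intro i
      refine Fin.cases ?_ ?_ i
      · rw [hlamzero]; exact hlam0ker
      · intro i
        rw [hlamsucc]
        rw [Fin.sum_univ_succ, hJ0, zero_mul, zero_add]
        calc ∑ j : Fin (n+1), J (lam' i) j.succ * b j.succ
            = ∑ j : Fin (n+1), lam' i j * t j := by
              refine Finset.sum_congr rfl fun j _ => ?_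
              rw [hJapp]
              rfl
          _ = 0 := h0' i
    · -- generation
      intro w hw
      have hwsum : w 0 * b 0 + ∑ j : Fin (n+1), w j.succ * t j = 0 := by
        have hw2 := hw
        rw [Fin.sum_univ_succ] at hw2
        exact hw2
      have hg'dvd : g' ∣ ∑ j : Fin (n+1), w j.succ * t j :=
        Finset.dvd_sum fun j _ => (Finset.gcd_dvd (mem_univ j)).mul_left _
      have hg'wb : g' ∣ w 0 * b 0 := by
        have : w 0 * b 0 = -∑ j : Fin (n+1), w j.succ * t j := by omega
        rw [this]; exact hg'dvd.neg_right
      -- coprimality: p ∣ w 0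
      have hgnat : ((Int.gcd (b 0) g' : ℕ) : ℤ) = g := by
        rw [Int.coe_gcd]; exact hsplit.symm
      have hgnatpos : 0 < Int.gcd (b 0) g' := by omega
      have hcop : Int.gcd (b 0 / g) p = 1 := by
        have := Int.gcd_div_gcd_div_gcd (i := b 0) (j := g') hgnatpos
        rwa [hgnat] at this
      have hpdvd : p ∣ w 0 * (b 0 / g) := by
        obtain ⟨k, hk⟩ := hg'wb
        refine ⟨k, ?_⟩
        apply mul_left_cancel₀ hgpos.ne'
        calc g * (w 0 * (b 0 / g)) = w 0 * (g * (b 0 / g)) := by ring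
          _ = w 0 * b 0 := by rw [Int.mul_ediv_cancel' hgb0]
          _ = g' * k := hk
          _ = g * (p * k) := by rw [← hgp]; ring
      have hpw0 : p ∣ w 0 := by
        have hcop' : IsCoprime p (b 0 / g) := by
          rw [Int.isCoprime_iff_gcd_eq_one, Int.gcd_comm]
          exact hcop
        exact hcop'.dvd_of_dvd_mul_right hpdvd
      set q : ℤ := w 0 / p with hq
      have hpq : p * q = w 0 := Int.mul_ediv_cancel' hpw0
      set w1 : Fin (n + 2) → ℤ := w - q • lam0 with hw1
      have hw10 : w1 0 = 0 := by
        rw [hw1]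
        show w 0 - q * lam0 0 = 0
        have : lam0 0 = p := rfl
        rw [this, ← hpq]; ring
      have hw1ker : ∑ j, w1 j * b j = 0 := by
        have : ∀ j, w1 j * b j = w j * b j - q * (lam0 j * b j) := fun j => by
          show (w j - q * lam0 j) * b j = _; ring
        rw [Finset.sum_congr rfl fun j _ => this j, Finset.sum_sub_distrib, hw,
          ← Finset.mul_sum, hlam0ker, mul_zero, sub_zero]
      have htw1 : ∑ j : Fin (n+1), (Fin.tail w1) j * t j = 0 := by
        have := hw1ker
        rw [Fin.sum_univ_succ, hw10, zero_mul, zero_add] at this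
        exact this
      have hmem' : Fin.tail w1 ∈ AddSubgroup.closure (Set.range lam') := hgen' _ htw1
      have hw1eq : w1 = J (Fin.tail w1) := by
        funext j
        refine Fin.cases ?_ ?_ j
        · rw [hJ0, hw10]
        · intro j; rw [hJapp]; rfl
      have hsub : (⇑J '' Set.range lam') ⊆ Set.range lam := by
        rintro x ⟨y, ⟨i, rfl⟩, rfl⟩
        exact ⟨Fin.succ i, (hlamsucc i).symm⟩
      have hw1mem : w1 ∈ AddSubgroup.closure (Set.range lam) := by
        rw [hw1eq]
        have h1 : J (Fin.tail w1) ∈ (AddSubgroup.closure (Set.range lam')).map J :=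
          AddSubgroup.mem_map_of_mem J hmem'
        rw [AddMonoidHom.map_closure] at h1
        exact AddSubgroup.closure_mono hsub h1
      have hlam0mem : lam0 ∈ AddSubgroup.closure (Set.range lam) :=
        AddSubgroup.subset_closure ⟨0, hlamzero⟩
      have : w = q • lam0 + w1 := by rw [hw1]; ring
      rw [this]
      exact add_mem (AddSubgroup.zsmul_mem _ hlam0mem q) hw1mem
    · -- norms
      have hsumt : ∑ j : Fin (n+1), |b (Fin.succ j)| = ∑ j : Fin (n+1), |t j| := rfl
      have hsumb : ∑ j, |b j| = |b 0| + ∑ j : Fin (n+1), |t j| := by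
        rw [Fin.sum_univ_succ]; rfl
      have hTnn : 0 ≤ ∑ j : Fin (n+1), |t j| := Finset.sum_nonneg fun _ _ => abs_nonneg _
      have hg'leT : g' ≤ ∑ j : Fin (n+1), |t j| := by
        have h1 : g' ≤ |t (Fin.last n)| :=
          Int.le_of_dvd (abs_pos.2 hlast') ((dvd_abs _ _).2 (Finset.gcd_dvd (mem_univ _)))
        have h2 : |t (Fin.last n)| ≤ ∑ j : Fin (n+1), |t j| :=
          Finset.single_le_sum (fun j _ => abs_nonneg (t j)) (mem_univ _)
        omega
      intro i
      refine Fin.cases ?_ ?_ i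
      · rw [hlamzero, Fin.sum_univ_succ]
        have h1 : |lam0 0| = p := by
          show |p| = p; exact abs_of_pos hppos
        have h2 : ∑ j : Fin (n+1), |lam0 j.succ| = ∑ j : Fin (n+1), |μ j| := by
          refine Finset.sum_congr rfl fun j _ => ?_
          show |(Fin.cons p μ : Fin (n+2) → ℤ) j.succ| = _
          rw [Fin.cons_succ]
        rw [h1, h2]
        -- |c| = |b0/g| * g', and |b0/g| ≤ |b 0|
        have hcabs : |c| = |b 0 / g| * g' := by
          rw [hcdef, abs_neg, abs_mul, abs_of_pos hg'pos]
        have hb0g : |b 0 / g| ≤ |b 0| := by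
          have habs0 : |b 0| = g * |b 0 / g| := by
            conv_lhs => rw [← Int.mul_ediv_cancel' hgb0]
            rw [abs_mul, abs_of_pos hgpos]
          nlinarith [abs_nonneg (b 0 / g)]
        have hμle : ∑ j : Fin (n+1), |μ j| ≤ |b 0 / g| + ∑ j : Fin (n+1), |t j| := by
          have h3 : g' * ∑ j : Fin (n+1), |μ j| ≤ |b 0 / g| * g' + ∑ j : Fin (n+1), |t j| := by
            rw [← hcabs]; exact hμnorm
          refine le_of_mul_le_mul_left ?_ hg'pos
          have h4 : |b 0 / g| * g' + ∑ j : Fin (n+1), |t j| ≤ g' * (|b 0 / g| + ∑ j : Fin (n+1), |t j|) := by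
            have := le_mul_of_one_le_left hTnn hg'pos
            linarith
          linarith
        have hpleT : p ≤ ∑ j : Fin (n+1), |t j| :=
          le_trans (le_trans (le_mul_of_one_le_left hppos.le hgpos) (le_of_eq hgp)) hg'leT
        rw [hsumb]
        have hb0nn : 0 ≤ |b 0| := abs_nonneg _
        linarith
      · intro i
        rw [hlamsucc, Fin.sum_univ_succ]
        have h1 : |J (lam' i) 0| = 0 := by rw [hJ0]; rfl
        have h2 : ∑ j : Fin (n+1), |J (lam' i) j.succ| = ∑ j : Fin (n+1), |lam' i j| := by
          refine Finset.sum_congr rfl fun j _ => ?_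
          rw [hJapp]
        rw [h1, h2, hsumb]
        have := hnorm' i
        have hb0nn : 0 ≤ |b 0| := abs_nonneg _
        linarith

/-- for a nonzero `b ∈ ℤ^k` (`k ≥ 2`), the kernel of the dot
product map `φ_b : ℤ^k → ℤ` is generated by `k - 1` vectors of ℓ¹-norm at most
`2^(k-1) ‖b‖₁`. -/
theorem kernel_of_dot_product_generators (k : ℕ) (hk : 2 ≤ k) (b : Fin k → ℤ)
    (hb : b ≠ 0) (φ : (Fin k → ℤ) →+ ℤ) (hφ : ∀ u : Fin k → ℤ, φ u = ∑ i, u i * b i) :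
    ∃ lam : Fin (k - 1) → (Fin k → ℤ),
      AddSubgroup.closure (Set.range lam) = φ.ker ∧
      ∀ i : Fin (k - 1), (∑ j, |lam i j|) ≤ 2 ^ (k - 1) * ∑ j, |b j| := by
  obtain ⟨m, rfl⟩ : ∃ m, k = m + 2 := ⟨k - 2, by omega⟩
  have hbex : ∃ j, b j ≠ 0 := by
    by_contra h; push_neg at h; exact hb (funext fun j => h j)
  obtain ⟨j1, hj1⟩ := hbex
  obtain ⟨j0, hj0mem, hj0min⟩ :=
    Finset.exists_min_image (Finset.univ.filter fun j => b j ≠ 0) (fun j => |b j|)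
      ⟨j1, Finset.mem_filter.2 ⟨Finset.mem_univ _, hj1⟩⟩
  have hj0 : b j0 ≠ 0 := (Finset.mem_filter.1 hj0mem).2
  set σ : Equiv.Perm (Fin (m + 2)) := Equiv.swap j0 (Fin.last (m + 1)) with hσ
  have hσσ : ∀ j, σ (σ j) = j := fun j => Equiv.swap_apply_self _ _ j
  set b' : Fin (m + 2) → ℤ := fun j => b (σ j) with hb'
  have hb'last : b' (Fin.last (m + 1)) = b j0 := by
    rw [hb']; simp only [hσ, Equiv.swap_apply_right]
  have hlast' : b' (Fin.last (m + 1)) ≠ 0 := by rw [hb'last]; exact hj0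
  have hmin' : ∀ j, b' j = 0 ∨ |b' (Fin.last (m + 1))| ≤ |b' j| := by
    intro j
    by_cases h : b' j = 0
    · exact Or.inl h
    · refine Or.inr ?_
      rw [hb'last]
      exact hj0min (σ j) (Finset.mem_filter.2 ⟨Finset.mem_univ _, h⟩)
  obtain ⟨lam', h0', hgen', hnorm'⟩ := CORE (m + 1) b' hlast' hmin'
  set E : (Fin (m + 2) → ℤ) →+ (Fin (m + 2) → ℤ) :=
    { toFun := fun v => fun j => v (σ j)
      map_zero' := rfl
      map_add' := fun _ _ => rfl } with hE
  refine ⟨fun i => E (lam' i), ?_, ?_⟩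
  · apply le_antisymm
    · rw [AddSubgroup.closure_le]
      rintro x ⟨i, rfl⟩
      have : φ (E (lam' i)) = 0 := by
        rw [hφ]
        calc ∑ j, E (lam' i) j * b j
            = ∑ j, (fun j => lam' i j * b' j) (σ j) := by
              refine Finset.sum_congr rfl fun j _ => ?_
              show lam' i (σ j) * b j = lam' i (σ j) * b' (σ j)
              rw [hb']
              simp only [hσσ]
          _ = ∑ j, lam' i j * b' j := by simpa using Equiv.sum_comp σ (fun j => lam' i j * b' j)
          _ = 0 := h0' i
      exact this
    · intro u hu
      have hu0 : ∑ j, u j * b j = 0 := by rw [← hφ u]; exact hu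
      set u' : Fin (m + 2) → ℤ := fun j => u (σ j) with hu'
      have hu'0 : ∑ j, u' j * b' j = 0 := by
        calc ∑ j, u' j * b' j = ∑ j, (fun j => u j * b j) (σ j) := rfl
          _ = ∑ j, u j * b j := by simpa using Equiv.sum_comp σ (fun j => u j * b j)
          _ = 0 := hu0
      have hmem : u' ∈ AddSubgroup.closure (Set.range lam') := hgen' u' hu'0
      have huE : u = E u' := by
        funext j
        show u j = u (σ (σ j))
        rw [hσσ]
      rw [huE]
      have h1 : E u' ∈ (AddSubgroup.closure (Set.range lam')).map E :=
        AddSubgroup.mem_map_of_mem E hmem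
      rw [AddMonoidHom.map_closure] at h1
      have him : (⇑E '' Set.range lam') = Set.range (fun i => E (lam' i)) := by
        rw [← Set.range_comp]; rfl
      rw [him] at h1
      exact h1
  · intro i
    have h1 : ∑ j, |E (lam' i) j| = ∑ j, |lam' i j| := by
      calc ∑ j, |E (lam' i) j| = ∑ j, (fun j => |lam' i j|) (σ j) := rfl
        _ = ∑ j, |lam' i j| := by simpa using Equiv.sum_comp σ (fun j => |lam' i j|)
    have h2 : ∑ j, |b' j| = ∑ j, |b j| := by
      calc ∑ j, |b' j| = ∑ j, (fun j => |b j|) (σ j) := rfl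
        _ = ∑ j, |b j| := by simpa using Equiv.sum_comp σ (fun j => |b j|)
    have h3 := hnorm' i
    rw [h2] at h3
    rw [h1]
    refine le_trans h3 ?_
    have hbnn : 0 ≤ ∑ j, |b j| := Finset.sum_nonneg fun _ _ => abs_nonneg _
    have hpow : (2 : ℤ) ≤ 2 ^ (m + 2 - 1) := by
      have : (2 : ℤ) ^ 1 ≤ 2 ^ (m + 1) := pow_le_pow_right₀ one_le_two (by omega)
      simpa using this
    exact mul_le_mul_of_nonneg_right hpow hbnn
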